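/- For every n ≥ 1, ‖φ(Δt C)^n‖_∞ = x^n + (1 − x^n)·2S/h, where x = φ(−rΔt) = (1 − (1−θ)rΔt)/(1 + θ rΔt). -/

import Mathlib

/-- The maximum norm of a real matrix: `‖X‖_∞ = max_i Σ_j |X i j|`. -/
noncomputable def matMaxNorm {ι κ : Type*} [Fintype ι] [Fintype κ]
    (X : Matrix ι κ ℝ) : ℝ :=
  ⨆ i, ∑ j, |X i j|

/-- The `2×2` matrix both of whose rows equal `(−rS/h, r·s_{m+1}/h)`. -/
noncomputable def Cmat (r spen S h : ℝ) : Matrix (Fin 2) (Fin 2) ℝ :=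
  Matrix.of fun _ j => if j = 0 then -(r * S) / h else r * spen / h

/-- `φ(Δt X) = (I − θΔt X)⁻¹ (I + (1−θ)Δt X)`. -/
noncomputable def phiM {ι : Type*} [Fintype ι] [DecidableEq ι] (θ dt : ℝ)
    (X : Matrix ι ι ℝ) : Matrix ι ι ℝ :=
  (1 - (θ * dt) • X)⁻¹ * (1 + ((1 - θ) * dt) • X)

private lemma sup_fin2 (f : Fin 2 → ℝ) : (⨆ i, f i) = max (f 0) (f 1) := by
  apply le_antisymm
  · refine ciSup_le fun i => ?_
    fin_cases i
    · exact le_max_left _ _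
    · exact le_max_right _ _
  · exact max_le (le_ciSup (Set.Finite.bddAbove (Set.finite_range f)) 0)
      (le_ciSup (Set.Finite.bddAbove (Set.finite_range f)) 1)

lemma aff_mul {r : ℝ} {C : Matrix (Fin 2) (Fin 2) ℝ} (hCC : C * C = (-r) • C)
    (a b : ℝ) : (1 + a • C) * (1 + b • C) = 1 + (a + b - r * (a * b)) • C := by
  rw [add_mul, mul_add, mul_add]
  simp only [one_mul, mul_one, Matrix.smul_mul, Matrix.mul_smul, smul_smul, hCC]
  module

/-- For every `n ≥ 1`, `‖φ(Δt C)^n‖_∞ = x^n + (1 − x^n)·2S/h`, where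
`x = φ(−rΔt) = (1 − (1−θ)rΔt)/(1 + θrΔt)`. -/
theorem statement15 (r spen S : ℝ) (hr : 0 < r) (hspen : 0 < spen) (hsS : spen < S)
    (θ dt : ℝ) (hθ : θ ∈ Set.Icc (1/2 : ℝ) 1) (hdt : 0 < dt)
    (C : Matrix (Fin 2) (Fin 2) ℝ) (hC : C = Cmat r spen S (S - spen))
    (x : ℝ) (hx : x = (1 - (1 - θ) * r * dt) / (1 + θ * r * dt)) :
    ∀ n : ℕ, 1 ≤ n →
      matMaxNorm ((phiM θ dt C) ^ n) =
        x ^ n + (1 - x ^ n) * (2 * S / (S - spen)) := by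

  have hh : (0:ℝ) < S - spen := by linarith
  obtain ⟨hθ1, hθ2⟩ := hθ
  have hrdt : 0 < r * dt := mul_pos hr hdt
  have hd : (0:ℝ) < 1 + θ * r * dt := by nlinarith
  -- C * C = -r • C
  have hCC : C * C = (-r) • C := by
    subst hC
    ext i j
    fin_cases i <;> fin_cases j <;>
      · simp [Cmat, Matrix.mul_apply, Fin.sum_univ_two]
        field_simp
        ring
  -- determinant of I - θΔt C
  have hdet : (1 - (θ * dt) • C).det = 1 + θ * r * dt := by
    subst hC
    simp [Matrix.det_fin_two, Cmat, Matrix.one_apply]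
    field_simp
    ring
  have hdet' : IsUnit (1 - (θ * dt) • C).det := by
    rw [hdet]; exact (isUnit_iff_ne_zero).2 hd.ne'
  -- phiM = 1 + ((1-x)/r) • C
  have hM : phiM θ dt C = 1 + ((1 - x) / r) • C := by
    have key : (1 - (θ * dt) • C) * (1 + ((1 - x) / r) • C)
        = 1 + ((1 - θ) * dt) • C := by
      have h1 : (1 - (θ * dt) • C) = 1 + (-(θ * dt)) • C := by module
      rw [h1, aff_mul hCC]
      congr 1
      have : -(θ * dt) + (1 - x) / r - r * (-(θ * dt) * ((1 - x) / r))
          = (1 - θ) * dt := by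
        subst hx
        field_simp
        ring
      rw [this]
    rw [phiM, ← key, ← Matrix.mul_assoc, Matrix.nonsing_inv_mul _ hdet', one_mul]
  -- powers
  have hpow : ∀ n : ℕ, (phiM θ dt C) ^ n = 1 + ((1 - x ^ n) / r) • C := by
    intro n
    induction n with
    | zero => simp
    | succ n ih =>
      have hc : (1 - x ^ n) / r + (1 - x) / r
          - r * ((1 - x ^ n) / r * ((1 - x) / r)) = (1 - x ^ (n + 1)) / r := by
        field_simp
        ring
      rw [pow_succ, ih, hM, aff_mul hCC, hc]
  -- |x| ≤ 1
  have hx1 : x < 1 := by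
    rw [hx, div_lt_one hd]; nlinarith
  have hxm1 : -1 < x := by
    rw [hx, lt_div_iff₀ hd]; nlinarith
  intro n hn
  have hxn : x ^ n ≤ 1 := by
    calc x ^ n ≤ |x ^ n| := le_abs_self _
    _ = |x| ^ n := abs_pow x n
    _ ≤ 1 := pow_le_one₀ (abs_nonneg x) (abs_le.2 ⟨hxm1.le, hx1.le⟩)
  set y := 1 - x ^ n with hy
  have hy0 : 0 ≤ y := by simp [hy]; linarith
  rw [hpow n, matMaxNorm, sup_fin2]
  have e00 : ((1 + ((1 - x ^ n) / r) • C) : Matrix (Fin 2) (Fin 2) ℝ) 0 0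
      = 1 - y * S / (S - spen) := by
    subst hC
    simp [Cmat, Matrix.one_apply, hy]
    field_simp
    ring
  have e01 : ((1 + ((1 - x ^ n) / r) • C) : Matrix (Fin 2) (Fin 2) ℝ) 0 1
      = y * spen / (S - spen) := by
    subst hC
    simp [Cmat, Matrix.one_apply, hy]
    field_simp
  have e10 : ((1 + ((1 - x ^ n) / r) • C) : Matrix (Fin 2) (Fin 2) ℝ) 1 0
      = -(y * S / (S - spen)) := by
    subst hC
    simp [Cmat, Matrix.one_apply, hy]
    field_simp
  have e11 : ((1 + ((1 - x ^ n) / r) • C) : Matrix (Fin 2) (Fin 2) ℝ) 1 1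
      = 1 + y * spen / (S - spen) := by
    subst hC
    simp [Cmat, Matrix.one_apply, hy]
    field_simp
  rw [Fin.sum_univ_two, Fin.sum_univ_two, e00, e01, e10, e11]
  have hS : (0:ℝ) < S := hspen.trans hsS
  have ha : 0 ≤ y * S / (S - spen) := div_nonneg (mul_nonneg hy0 hS.le) hh.le
  have hb : 0 ≤ y * spen / (S - spen) := div_nonneg (mul_nonneg hy0 hspen.le) hh.le
  rw [abs_of_nonneg hb, abs_neg, abs_of_nonneg ha, abs_of_nonneg (by linarith : (0:ℝ) ≤ 1 + y * spen / (S - spen))]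
  rw [max_eq_right]
  · have : x ^ n = 1 - y := by simp [hy]
    rw [this]
    field_simp
    ring
  · have : |1 - y * S / (S - spen)| ≤ 1 + y * S / (S - spen) :=
      abs_le.2 ⟨by linarith, by linarith⟩
    linarith
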